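/- arXiv:1610.01686 — 2 statements merged into one kernel-verified Lean document; each statement's English description precedes it below -/
import Mathlib

section
/- For m ≥ 1 and α ≥ 1, the number of self-conjugate partitions with distinct parts that are simultaneously (2α)-core and (2αm + 1)-core equals mα + 1. -/
/-- A partition: a weakly decreasing list of positive integers. -/
def IsPartition (l : List ℕ) : Prop :=
  l.Pairwise (· ≥ ·) ∧ ∀ x ∈ l, 0 < x

/-- Hook length at the cell in row `i`, column `j` (0-indexed). -/
def hookLength (l : List ℕ) (i j : ℕ) : ℕ :=
  (l.getD i 0 - j - 1) + ((l.filter (fun x => j < x)).length - i - 1) + 1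

/-- The Young diagram of `l` contains a hook of length `h`. -/
def HasHook (l : List ℕ) (h : ℕ) : Prop :=
  ∃ i j, j < l.getD i 0 ∧ hookLength l i j = h

/-- `l` is an `s`-core: no hook of length `s`. -/
def IsCore (s : ℕ) (l : List ℕ) : Prop := ¬ HasHook l s

/-- The conjugate (transpose) partition. -/
def conjugate (l : List ℕ) : List ℕ :=
  (List.range (l.headD 0)).map (fun j => (l.filter (fun x => j < x)).length)

def SelfConjugate (l : List ℕ) : Prop := conjugate l = l

/-- The staircase partition `(k, k-1, …, 1)`. -/
def staircase (k : ℕ) : List ℕ := (List.range k).map (fun i => k - i)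

/-- The minimal bead set: the set of first-column hook lengths. -/
def beadSet (l : List ℕ) : Finset ℕ :=
  (Finset.range l.length).image (fun i => l.getD i 0 + (l.length - 1 - i))

lemma staircase_succ (k : ℕ) : staircase (k + 1) = (k + 1) :: staircase k := by
  simp only [staircase, List.range_succ_eq_map, List.map_cons, Nat.sub_zero, List.map_map]
  congr 1
  refine List.map_congr_left (fun i hi => ?_)
  simp

lemma length_staircase (k : ℕ) : (staircase k).length = k := by simp [staircase]

lemma getElem_staircase (k i : ℕ) (h : i < k) :
    (staircase k)[i]'(by simpa [length_staircase]) = k - i := by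
  simp [staircase]

lemma getD_staircase (k i : ℕ) (h : i < k) : (staircase k).getD i 0 = k - i := by
  rw [List.getD_eq_getElem _ _ (by simpa [length_staircase]), getElem_staircase k i h]

lemma mem_staircase {k x : ℕ} : x ∈ staircase k ↔ 1 ≤ x ∧ x ≤ k := by
  simp only [staircase, List.mem_map, List.mem_range]
  constructor
  · rintro ⟨i, hi, rfl⟩; omega
  · rintro ⟨h1, h2⟩; exact ⟨k - x, by omega, by omega⟩

lemma filter_staircase (k j : ℕ) :
    ((staircase k).filter (fun x => j < x)).length = k - j := by
  induction k with
  | zero => simp [staircase]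
  | succ k ih =>
    rw [staircase_succ, List.filter_cons]
    by_cases h : j < k + 1
    · simp [h, ih]; omega
    · simp [h, ih]; omega

lemma headD_staircase (k : ℕ) : (staircase k).headD 0 = k := by
  cases k with
  | zero => simp [staircase]
  | succ k => rw [staircase_succ]; rfl

lemma nodup_staircase (k : ℕ) : (staircase k).Nodup := by
  induction k with
  | zero => simp [staircase]
  | succ k ih =>
    rw [staircase_succ]
    refine List.Nodup.cons (fun h => ?_) ih
    rw [mem_staircase] at h; omega

lemma sorted_staircase (k : ℕ) : (staircase k).Pairwise (· ≥ ·) := by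
  induction k with
  | zero => simp [staircase]
  | succ k ih =>
    rw [staircase_succ, List.pairwise_cons]
    exact ⟨fun b hb => by rw [mem_staircase] at hb; omega, ih⟩

lemma isPartition_staircase (k : ℕ) : IsPartition (staircase k) := by
  refine ⟨sorted_staircase k, fun x hx => ?_⟩
  rw [mem_staircase] at hx; omega

lemma selfConjugate_staircase (k : ℕ) : SelfConjugate (staircase k) := by
  unfold SelfConjugate conjugate
  rw [headD_staircase]
  unfold staircase
  refine List.map_congr_left (fun j hj => ?_)
  exact filter_staircase k j

lemma hookLength_staircase (k i j : ℕ) (h : i + j < k) :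
    hookLength (staircase k) i j = 2 * (k - i - j - 1) + 1 := by
  unfold hookLength
  rw [getD_staircase k i (by omega), filter_staircase]
  omega

/-- Structure of hooks of the staircase. -/
lemma hasHook_staircase_iff (k h : ℕ) :
    HasHook (staircase k) h ↔ ∃ c, c < k ∧ h = 2 * c + 1 := by
  constructor
  · rintro ⟨i, j, hj, hh⟩
    have hik : i < k := by
      by_contra hik
      rw [List.getD_eq_default _ _ (by rw [length_staircase]; omega)] at hj
      omega
    rw [getD_staircase k i hik] at hj
    rw [hookLength_staircase k i j (by omega)] at hh
    exact ⟨k - i - j - 1, by omega, hh.symm⟩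
  · rintro ⟨c, hc, rfl⟩
    refine ⟨0, k - 1 - c, ?_, ?_⟩
    · rw [getD_staircase k 0 (by omega)]; omega
    · rw [hookLength_staircase k 0 _ (by omega)]; omega

lemma staircase_mem_set (m α k : ℕ) (hα : 1 ≤ α) (hk : k ≤ α * m) :
    IsPartition (staircase k) ∧ SelfConjugate (staircase k) ∧ (staircase k).Nodup ∧
      IsCore (2 * α) (staircase k) ∧ IsCore (2 * α * m + 1) (staircase k) := by
  refine ⟨isPartition_staircase k, selfConjugate_staircase k, nodup_staircase k, ?_, ?_⟩
  · intro hh; rw [hasHook_staircase_iff] at hh; obtain ⟨c, _, hc⟩ := hh; omega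
  · intro hh; rw [hasHook_staircase_iff] at hh; obtain ⟨c, h1, h2⟩ := hh
    have : 2 * α * m = 2 * (α * m) := by ring
    omega

lemma eq_staircase_of_mem {l : List ℕ} (hp : IsPartition l) (hsc : SelfConjugate l)
    (hnd : l.Nodup) : l = staircase l.length := by
  rcases l.eq_nil_or_concat with rfl | _
  · rfl
  set k := l.length with hk
  -- head equals length, from self-conjugacy
  have hlen : l.headD 0 = k := by
    have := congrArg List.length hsc
    simpa [conjugate] using this
  -- strictly decreasing
  have hstrict : List.Pairwise (· > ·) l := by
    have h1 := hp.1
    have := List.Pairwise.and h1 hnd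
    exact this.imp (fun hab => lt_of_le_of_ne hab.1 (Ne.symm hab.2))
  rw [List.pairwise_iff_getElem] at hstrict
  have hadj : ∀ i, i + 1 < k → l.getD (i + 1) 0 < l.getD i 0 := by
    intro i hi
    rw [List.getD_eq_getElem _ _ (by omega), List.getD_eq_getElem _ _ (by omega)]
    exact hstrict i (i + 1) (by omega) (by omega) (by omega)
  have haux : ∀ d i, i + d < k → l.getD (i + d) 0 + d ≤ l.getD i 0 := by
    intro d
    induction d with
    | zero => intro i _; simp
    | succ d ih =>
      intro i hi
      have h1 := ih (i + 1) (by omega)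
      have h2 := hadj i (by omega)
      have : i + 1 + d = i + (d + 1) := by omega
      rw [this] at h1
      omega
  have hhead : 0 < k → l.getD 0 0 = k := by
    intro hk0
    rcases l with _ | ⟨a, l⟩
    · simp [hk] at hk0
    · simpa using hlen
  have hlast : 0 < k → 1 ≤ l.getD (k - 1) 0 := by
    intro hk0
    rw [List.getD_eq_getElem _ _ (by omega)]
    exact hp.2 _ (List.getElem_mem _)
  have hval : ∀ i, i < k → l.getD i 0 = k - i := by
    intro i hi
    have h1 := haux i 0 (by omega)
    have h2 := haux (k - 1 - i) i (by omega)
    have h3 := hhead (by omega)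
    have h4 := hlast (by omega)
    simp only [Nat.zero_add] at h1
    have : i + (k - 1 - i) = k - 1 := by omega
    rw [this] at h2
    omega
  refine List.ext_getElem (by rw [length_staircase]) (fun n h1 h2 => ?_)
  rw [getElem_staircase k n (by omega), ← List.getD_eq_getElem l 0 h1, hval n (by omega)]

theorem selfConjugate_distinct_even_plus (m α : ℕ) (hm : 1 ≤ m) (hα : 1 ≤ α) :
    {l : List ℕ | IsPartition l ∧ SelfConjugate l ∧ l.Nodup ∧
      IsCore (2 * α) l ∧ IsCore (2 * α * m + 1) l}.ncard = m * α + 1 := by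
  have hset : {l : List ℕ | IsPartition l ∧ SelfConjugate l ∧ l.Nodup ∧
      IsCore (2 * α) l ∧ IsCore (2 * α * m + 1) l} = staircase '' Set.Iic (α * m) := by
    ext l
    simp only [Set.mem_setOf_eq, Set.mem_image, Set.mem_Iic]
    constructor
    · rintro ⟨hp, hsc, hnd, hc1, hc2⟩
      refine ⟨l.length, ?_, (eq_staircase_of_mem hp hsc hnd).symm⟩
      by_contra hgt
      apply hc2
      rw [eq_staircase_of_mem hp hsc hnd, hasHook_staircase_iff]
      exact ⟨α * m, by omega, by ring⟩
    · rintro ⟨k, hk, rfl⟩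
      exact staircase_mem_set m α k hα hk
  rw [hset, Set.ncard_image_of_injOn (fun a _ b _ hab => by
    have := congrArg List.length hab
    simpa [length_staircase] using this)]
  rw [← Finset.coe_Iic, Set.ncard_coe_finset, Nat.card_Iic]
  ring
end

section
/- Let m ≥ 1 and s = 2t−1 with t ≥ 1. Among all partitions that are simultaneously s-core, (ms−1)-core and (ms+1)-core, the one with the largest number of parts has weight m²t(t−1)(t²−t+1)/6. -/
section Generic
variable (l : List ℕ)

/-- bead value -/
def bead (i : ℕ) : ℕ := l.getD i 0 + (l.length - 1 - i)

lemma getD_anti (h : l.Pairwise (· ≥ ·)) {i j : ℕ} (hij : i ≤ j) :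
    l.getD j 0 ≤ l.getD i 0 := by
  by_cases hj : j < l.length
  · have hi : i < l.length := lt_of_le_of_lt hij hj
    rw [List.getD_eq_getElem l 0 hj, List.getD_eq_getElem l 0 hi]
    exact h.rel_get_of_le (a := ⟨i, hi⟩) (b := ⟨j, hj⟩) hij
  · rw [List.getD_eq_default l 0 (not_lt.mp hj)]
    exact Nat.zero_le _

lemma getD_pos (h : IsPartition l) {i : ℕ} (hi : i < l.length) :
    1 ≤ l.getD i 0 := by
  rw [List.getD_eq_getElem l 0 hi]
  exact h.2 _ (l.getElem_mem hi)

lemma bead_anti (h : IsPartition l) {i j : ℕ} (hij : i ≤ j) (hj : j < l.length) :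
    bead l j + (j - i) ≤ bead l i := by
  have key : ∀ d i', i' + d < l.length → bead l (i' + d) + d ≤ bead l i' := by
    intro d
    induction d with
    | zero => intro i' _; simp
    | succ d ih =>
      intro i' h'
      have h1 : i' + d < l.length := by omega
      have h2 := ih i' h1
      have h3 : l.getD (i' + d + 1) 0 ≤ l.getD (i' + d) 0 := getD_anti l h.1 (by omega)
      have h4 : i' + (d + 1) = i' + d + 1 := rfl
      rw [h4]
      unfold bead at *
      omega
  have := key (j - i) i (by omega)
  have hji : i + (j - i) = j := by omega
  rw [hji] at this
  exact this

lemma bead_pos (h : IsPartition l) {i : ℕ} (hi : i < l.length) : 1 ≤ bead l i := by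
  have := getD_pos l h hi
  unfold bead; omega

lemma mem_beadSet_iff {x : ℕ} : x ∈ beadSet l ↔ ∃ i, i < l.length ∧ bead l i = x := by
  unfold beadSet bead
  simp [Finset.mem_image]

lemma bead_injOn (h : IsPartition l) :
    Set.InjOn (fun i => l.getD i 0 + (l.length - 1 - i)) (Finset.range l.length) := by
  intro i hi j hj hij
  simp only [Finset.coe_range, Set.mem_Iio] at hi hj
  simp only at hij
  by_contra hne
  rcases Nat.lt_or_ge i j with hlt | hge
  · have := bead_anti l h (le_of_lt hlt) hj
    unfold bead at this; omega
  · have hlt : j < i := by omega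
    have := bead_anti l h (le_of_lt hlt) hi
    unfold bead at this; omega

lemma card_beadSet (h : IsPartition l) : (beadSet l).card = l.length := by
  unfold beadSet
  rw [Finset.card_image_of_injOn (bead_injOn l h), Finset.card_range]

theorem sum_getD (l' : List ℕ) : ∑ i ∈ Finset.range l'.length, l'.getD i 0 = l'.sum := by
  induction l' with
  | nil => simp
  | cons a l ih =>
    rw [List.length_cons, Finset.sum_range_succ', List.sum_cons]
    simp only [List.getD_cons_succ, List.getD_cons_zero]
    rw [ih]; ring

lemma sum_beadSet (h : IsPartition l) :
    2 * ∑ b ∈ beadSet l, b = 2 * l.sum + l.length * (l.length - 1) := by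
  unfold beadSet
  rw [Finset.sum_image (bead_injOn l h)]
  rw [Finset.sum_add_distrib, sum_getD l]
  have h1 : ∑ i ∈ Finset.range l.length, (l.length - 1 - i) =
      ∑ i ∈ Finset.range l.length, i := by
    exact Finset.sum_range_reflect (fun i => i) l.length
  rw [h1]
  have := Finset.sum_range_id_mul_two l.length
  omega

def colLen (j : ℕ) : ℕ := (l.filter (fun x => j < x)).length

theorem countP_eq_card_filter (l' : List ℕ) (p : ℕ → Bool) :
    (l'.filter p).length = ((Finset.range l'.length).filter (fun i => p (l'.getD i 0))).card := by
  induction l' with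
  | nil => simp
  | cons a l' ih =>
    rw [List.length_cons, Finset.card_filter, Finset.sum_range_succ']
    simp only [List.getD_cons_succ, List.getD_cons_zero]
    rw [← Finset.card_filter, ← ih, List.filter_cons]
    by_cases h : p a <;> simp [h]

/-- A downward-closed subset of `range n` is `range` of its card. -/
lemma downward_closed_mem {n : ℕ} {F : Finset ℕ} (hF : F ⊆ Finset.range n)
    (dc : ∀ i j, i ≤ j → j ∈ F → i ∈ F) : ∀ i, i ∈ F ↔ i < F.card := by
  intro i
  constructor
  · intro hi
    have hsub : Finset.range (i + 1) ⊆ F := by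
      intro k hk
      simp only [Finset.mem_range] at hk
      exact dc k i (by omega) hi
    have := Finset.card_le_card hsub
    rw [Finset.card_range] at this
    omega
  · intro hi
    by_contra hni
    have hsub : F ⊆ Finset.range i := by
      intro k hk
      simp only [Finset.mem_range]
      by_contra hk2
      exact hni (dc i k (by omega) hk)
    have := Finset.card_le_card hsub
    rw [Finset.card_range] at this
    omega

/-- An upward-closed subset of `range n` is a top segment. -/
lemma upward_closed_mem {n : ℕ} {F : Finset ℕ} (hF : F ⊆ Finset.range n)
    (uc : ∀ i j, i ≤ j → j < n → i ∈ F → j ∈ F) :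
    ∀ i, i ∈ F ↔ n - F.card ≤ i ∧ i < n := by
  intro i
  have hGsub : (Finset.range n \ F) ⊆ Finset.range n := Finset.sdiff_subset
  have hdc : ∀ i j, i ≤ j → j ∈ Finset.range n \ F → i ∈ Finset.range n \ F := by
    intro a b hab hb
    simp only [Finset.mem_sdiff, Finset.mem_range] at hb ⊢
    refine ⟨by omega, fun ha => hb.2 (uc a b hab hb.1 ha)⟩
  have hmem := downward_closed_mem hGsub hdc
  have hcard : (Finset.range n \ F).card = n - F.card := by
    rw [Finset.card_sdiff_of_subset (fun x hx => hF hx), Finset.card_range]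
  constructor
  · intro hi
    have h1 : i < n := Finset.mem_range.mp (hF hi)
    have h2 : i ∉ Finset.range n \ F := by simp [hi]
    rw [hmem i, hcard] at h2
    have := Finset.card_le_card (fun x hx => hF hx)
    rw [Finset.card_range] at this
    omega
  · rintro ⟨h1, h2⟩
    by_contra hni
    have h3 : i ∈ Finset.range n \ F := by simp [hni, h2]
    rw [hmem i, hcard] at h3
    have := Finset.card_le_card (fun x hx => hF hx)
    rw [Finset.card_range] at this
    omega

lemma colLen_le : colLen l j ≤ l.length := List.length_filter_le _ _

lemma factA (h : IsPartition l) (j : ℕ) : ∀ i, i < l.length →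
    (j < l.getD i 0 ↔ i < colLen l j) := by
  have hrw : colLen l j =
      ((Finset.range l.length).filter (fun i => decide (j < l.getD i 0))).card := by
    unfold colLen
    exact countP_eq_card_filter l (fun x => decide (j < x))
  intro i hi
  have hF : ((Finset.range l.length).filter (fun i => decide (j < l.getD i 0))) ⊆
      Finset.range l.length := Finset.filter_subset _ _
  have hdc : ∀ a b, a ≤ b → b ∈ ((Finset.range l.length).filter
      (fun i => decide (j < l.getD i 0))) →
      a ∈ ((Finset.range l.length).filter (fun i => decide (j < l.getD i 0))) := by
    intro a b hab hb
    simp only [Finset.mem_filter, Finset.mem_range, decide_eq_true_eq] at hb ⊢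
    have := getD_anti l h.1 hab
    exact ⟨by omega, by omega⟩
  have hmem := downward_closed_mem hF hdc i
  rw [hrw, ← hmem, Finset.mem_filter, Finset.mem_range, decide_eq_true_eq]
  exact ⟨fun hj' => ⟨hi, hj'⟩, fun hh => hh.2⟩

lemma hook_to_bead (h : IsPartition l) {c : ℕ} (hk : HasHook l c) :
    ∃ i, i < l.length ∧ c ≤ bead l i ∧ bead l i - c ∉ beadSet l := by
  obtain ⟨i, j, hj, hhl⟩ := hk
  have hi : i < l.length := by
    by_contra hni
    rw [List.getD_eq_default l 0 (by omega)] at hj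
    omega
  have hcolj : i < colLen l j := (factA l h j i hi).mp hj
  have hcl : colLen l j ≤ l.length := colLen_le l
  unfold hookLength at hhl
  have hfil : (l.filter (fun x => j < x)).length = colLen l j := rfl
  rw [hfil] at hhl
  have hbead : bead l i = l.getD i 0 + (l.length - 1 - i) := rfl
  have hcb : c ≤ bead l i := by omega
  refine ⟨i, hi, hcb, ?_⟩
  intro hmem
  rw [mem_beadSet_iff] at hmem
  obtain ⟨k, hk, hbk⟩ := hmem
  have hbeadk : bead l k = l.getD k 0 + (l.length - 1 - k) := rfl
  rcases Nat.lt_or_ge k (colLen l j) with hlt | hge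
  · have h1 : j < l.getD k 0 := (factA l h j k hk).mpr hlt
    omega
  · have h1 : ¬ j < l.getD k 0 := fun hh => by
      have := (factA l h j k hk).mp hh; omega
    omega

lemma bead_to_hook (h : IsPartition l) {i c : ℕ} (hi : i < l.length)
    (hc : c ≤ bead l i) (hy : bead l i - c ∉ beadSet l) : HasHook l c := by
  set n := l.length with hn
  set y := bead l i - c with hydef
  have hc1 : 1 ≤ c := by
    by_contra hc0
    exact hy (by
      rw [mem_beadSet_iff]
      exact ⟨i, hi, by omega⟩)
  have hby : ∀ k, k < n → bead l k ≠ y := by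
    intro k hk hkeq
    exact hy (mem_beadSet_iff l |>.mpr ⟨k, hk, hkeq⟩)
  set K := (Finset.range n).filter (fun k => bead l k < y) with hK
  set u := K.card with hu
  have hKsub : K ⊆ Finset.range n := Finset.filter_subset _ _
  have hKuc : ∀ a b, a ≤ b → b < n → a ∈ K → b ∈ K := by
    intro a b hab hb ha
    simp only [hK, Finset.mem_filter, Finset.mem_range] at ha ⊢
    have := bead_anti l h hab hb
    exact ⟨hb, by omega⟩
  have hmemK := upward_closed_mem hKsub hKuc
  have hmemK' : ∀ k, k < n → (bead l k < y ↔ n - u ≤ k) := by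
    intro k hk
    have := hmemK k
    simp only [hK, Finset.mem_filter, Finset.mem_range] at this
    rw [← hu] at this
    omega
  have hun : u ≤ n := by
    have := Finset.card_le_card hKsub
    rw [Finset.card_range] at this
    omega
  have hiu : i < n - u := by
    have h1 : ¬ bead l i < y := by omega
    have := hmemK' i hi
    by_contra hcon
    have h2 : n - u ≤ i := by omega
    exact h1 (this.mpr h2)
  have h3a : ∀ k, k < n - u → y + (n - u - k) ≤ bead l k := by
    intro k hk
    have hnu1 : n - u - 1 < n := by omega
    have hb1 : ¬ bead l (n - u - 1) < y := by
      intro hcon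
      have := (hmemK' _ hnu1).mp hcon
      omega
    have hb2 : bead l (n - u - 1) ≠ y := hby _ hnu1
    have hchain := bead_anti l h (show k ≤ n - u - 1 by omega) hnu1
    omega
  have h3b : ∀ k, n - u ≤ k → k < n → bead l k + (k - (n - u)) + 1 ≤ y := by
    intro k hk1 hk2
    have hnun : n - u < n := by omega
    have hb1 : bead l (n - u) < y := (hmemK' _ hnun).mpr (le_refl _)
    have hchain := bead_anti l h (show n - u ≤ k from hk1) hk2
    omega
  have huy : u ≤ y := by
    rcases Nat.eq_zero_or_pos u with h0 | h0
    · omega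
    · have hn1 : n - u ≤ n - 1 := by omega
      have := h3b (n - 1) (by omega) (by omega)
      have := bead_pos l h (show n - 1 < n by omega)
      omega
  set j := y - u with hj
  have hbead_i : bead l i = l.getD i 0 + (n - 1 - i) := rfl
  have cKey : ∀ k, k < n → (j < l.getD k 0 ↔ k < n - u) := by
    intro k hk
    have hbead_k : bead l k = l.getD k 0 + (n - 1 - k) := rfl
    constructor
    · intro hjk
      by_contra hcon
      have hge : n - u ≤ k := by omega
      have := h3b k hge hk
      omega
    · intro hlt
      have := h3a k hlt
      omega
  have hcol : colLen l j = n - u := by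
    have hrw : colLen l j =
        ((Finset.range n).filter (fun k => decide (j < l.getD k 0))).card := by
      unfold colLen
      exact countP_eq_card_filter l (fun x => decide (j < x))
    rw [hrw]
    have : ((Finset.range n).filter (fun k => decide (j < l.getD k 0))) =
        Finset.range (n - u) := by
      ext k
      simp only [Finset.mem_filter, Finset.mem_range, decide_eq_true_eq]
      constructor
      · rintro ⟨h1, h2⟩; exact (cKey k h1).mp h2
      · intro h1; exact ⟨by omega, (cKey k (by omega)).mpr h1⟩
    rw [this, Finset.card_range]
  have hjlt : j < l.getD i 0 := by
    have := h3a i hiu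
    omega
  refine ⟨i, j, hjlt, ?_⟩
  unfold hookLength
  have hfil : (l.filter (fun x => j < x)).length = colLen l j := rfl
  rw [hfil, hcol]
  omega

lemma core_iff (h : IsPartition l) (c : ℕ) :
    IsCore c l ↔ ∀ b ∈ beadSet l, c ≤ b → b - c ∈ beadSet l := by
  constructor
  · intro hcore b hb hcb
    by_contra hnb
    rw [mem_beadSet_iff] at hb
    obtain ⟨i, hi, hbi⟩ := hb
    exact hcore (bead_to_hook l h hi (hbi ▸ hcb) (hbi ▸ hnb))
  · intro hcl hook
    obtain ⟨i, hi, h1, h2⟩ := hook_to_bead l h hook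
    exact h2 (hcl (bead l i) (mem_beadSet_iff l |>.mpr ⟨i, hi, rfl⟩) h1)

end Generic

def gapSet (m t : ℕ) : Finset ℕ :=
  (Finset.Icc 1 (t-1)).biUnion (fun q =>
    ((Finset.range (q*m)).image (fun k => q + k*(2*t-1))) ∪
    ((Finset.range (q*m-1)).image (fun k => (2*t-1) - q + k*(2*t-1))))

def IsRep (m t x : ℕ) : Prop :=
  ∃ a b c : ℕ, x = a*(2*t-1) + b*(m*(2*t-1)-1) + c*(m*(2*t-1)+1)

lemma mem_gapSet {m t x : ℕ} : x ∈ gapSet m t ↔ ∃ q k : ℕ, 1 ≤ q ∧ q + 1 ≤ t ∧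
    ((k < q*m ∧ x = q + k*(2*t-1)) ∨ (k + 1 < q*m ∧ x = (2*t-1) - q + k*(2*t-1))) := by
  unfold gapSet
  simp only [Finset.mem_biUnion, Finset.mem_Icc, Finset.mem_union, Finset.mem_image,
    Finset.mem_range]
  constructor
  · rintro ⟨q, ⟨hq1, hq2⟩, hcases⟩
    rcases hcases with ⟨k, hk, hx⟩ | ⟨k, hk, hx⟩
    · exact ⟨q, k, hq1, by omega, Or.inl ⟨hk, hx.symm⟩⟩
    · exact ⟨q, k, hq1, by omega, Or.inr ⟨by omega, hx.symm⟩⟩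
  · rintro ⟨q, k, hq1, hq2, hcases⟩
    refine ⟨q, ⟨hq1, by omega⟩, ?_⟩
    rcases hcases with ⟨hk, hx⟩ | ⟨hk, hx⟩
    · exact Or.inl ⟨k, hk, hx.symm⟩
    · exact Or.inr ⟨k, by omega, hx.symm⟩

lemma gap_pos {m t x : ℕ} (hx : x ∈ gapSet m t) : 1 ≤ x := by
  rw [mem_gapSet] at hx
  obtain ⟨q, k, hq1, hq2, hc⟩ := hx
  rcases hc with ⟨_, hx⟩ | ⟨_, hx⟩ <;> omega


private lemma class1 (s m q k a b c : ℤ) (hm : 1 ≤ m) (hq : 1 ≤ q) (hs : 2*q+1 ≤ s)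
    (ha0 : 0 ≤ a) (hb0 : 0 ≤ b) (hc0 : 0 ≤ c) (hk0 : 0 ≤ k) (hk : k < q*m)
    (heq : q + k*s = a*s + b*(m*s-1) + c*(m*s+1)) : False := by
  obtain ⟨j, hj, hkeq⟩ : ∃ j : ℤ, c - b - q = j*s ∧ k = a + (b+c)*m + j :=
    ⟨k - a - (b+c)*m, by linear_combination -heq, by ring⟩
  rcases lt_trichotomy j 0 with hjs | hjs | hjs
  · obtain ⟨w, hw1, hweq⟩ : ∃ w : ℤ, 1 ≤ w ∧ b = c - q + w*s :=
      ⟨-j, by omega, by linear_combination -hj⟩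
    have hws : w*(2*q+1) ≤ w*s := mul_le_mul_of_nonneg_left hs (by linarith)
    have h2q : 2*q*1 ≤ 2*q*w := mul_le_mul_of_nonneg_left hw1 (by linarith)
    have h2 : w + 2*q ≤ w*s := by nlinarith
    have h3 : (w*s - 2*q)*1 ≤ (w*s - 2*q)*m := mul_le_mul_of_nonneg_left hm (by linarith)
    have h4 : (w*s - q)*m ≤ (b+c)*m := mul_le_mul_of_nonneg_right (by linarith) (by linarith)
    nlinarith
  · have hceq : c = b + q := by
      rw [hjs, zero_mul] at hj; linarith
    have h1 : q*m ≤ (b+c)*m := mul_le_mul_of_nonneg_right (by linarith) (by linarith)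
    linarith
  · have hj1 : 1 ≤ j := hjs
    have h1 : 1*s ≤ j*s := mul_le_mul_of_nonneg_right hj1 (by linarith)
    have h2 : (q+s)*m ≤ (b+c)*m := mul_le_mul_of_nonneg_right (by linarith) (by linarith)
    nlinarith

private lemma class2 (s m q k a b c : ℤ) (hm : 1 ≤ m) (hq : 1 ≤ q) (hs : 2*q+1 ≤ s)
    (ha0 : 0 ≤ a) (hb0 : 0 ≤ b) (hc0 : 0 ≤ c) (hk0 : 0 ≤ k) (hk : k + 1 < q*m)
    (heq : (s - q) + k*s = a*s + b*(m*s-1) + c*(m*s+1)) : False := by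
  obtain ⟨j, hj, hkeq⟩ : ∃ j : ℤ, c - b + q = j*s ∧ k + 1 = a + (b+c)*m + j :=
    ⟨k + 1 - a - (b+c)*m, by linear_combination -heq, by ring⟩
  rcases lt_trichotomy j 0 with hjs | hjs | hjs
  · obtain ⟨w, hw1, hweq⟩ : ∃ w : ℤ, 1 ≤ w ∧ b = c + q + w*s :=
      ⟨-j, by omega, by linear_combination -hj⟩
    have hws : w*1 ≤ w*s := mul_le_mul_of_nonneg_left (by linarith) (by linarith)
    have h4 : (q + w*s)*m ≤ (b+c)*m := mul_le_mul_of_nonneg_right (by linarith) (by linarith)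
    have h5 : (w*s)*1 ≤ (w*s)*m := mul_le_mul_of_nonneg_left hm (by linarith)
    nlinarith
  · have hbeq : b = c + q := by
      rw [hjs, zero_mul] at hj; linarith
    have h1 : q*m ≤ (b+c)*m := mul_le_mul_of_nonneg_right (by linarith) (by linarith)
    linarith
  · have hj1 : 1 ≤ j := hjs
    have h1 : 1*s ≤ j*s := mul_le_mul_of_nonneg_right hj1 (by linarith)
    have h2 : q*m ≤ (s-q)*m := mul_le_mul_of_nonneg_right (by linarith) (by linarith)
    have h3 : (s-q)*m ≤ (b+c)*m := mul_le_mul_of_nonneg_right (by linarith) (by linarith)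
    linarith

lemma gap_not_rep {m t x : ℕ} (hm : 1 ≤ m) (hx : x ∈ gapSet m t) : ¬ IsRep m t x := by
  rw [mem_gapSet] at hx
  obtain ⟨q, k, hq1, hq2, hc⟩ := hx
  rintro ⟨a, b, c, hrep⟩
  have hms : 1 ≤ m * (2*t-1) := by
    have h1 : 1 ≤ 2*t-1 := by omega
    calc 1 = 1*1 := by ring
    _ ≤ m * (2*t-1) := Nat.mul_le_mul hm h1
  have h2t : 1 ≤ 2*t := by omega
  have hqs : q ≤ 2*t-1 := by omega
  zify [hms, h2t, hqs] at hrep hc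
  have hmZ : (1:ℤ) ≤ m := by exact_mod_cast hm
  have hqZ : (1:ℤ) ≤ q := by exact_mod_cast hq1
  have htZ : (q:ℤ) + 1 ≤ t := by exact_mod_cast hq2
  have hs3 : 2*(q:ℤ) + 1 ≤ 2*(t:ℤ) - 1 := by omega
  rcases hc with ⟨hk, hxeq⟩ | ⟨hk, hxeq⟩
  · refine class1 (2*(t:ℤ)-1) m q k a b c hmZ hqZ hs3 (Int.natCast_nonneg a)
      (Int.natCast_nonneg b) (Int.natCast_nonneg c) (Int.natCast_nonneg k) ?_ ?_
    · exact_mod_cast hk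
    · rw [hxeq] at hrep; linear_combination hrep
  · refine class2 (2*(t:ℤ)-1) m q k a b c hmZ hqZ hs3 (Int.natCast_nonneg a)
      (Int.natCast_nonneg b) (Int.natCast_nonneg c) (Int.natCast_nonneg k) ?_ ?_
    · exact_mod_cast hk
    · rw [hxeq] at hrep; linear_combination hrep

lemma rep_of_not_gap {m t x : ℕ} (hm : 1 ≤ m) (ht : 1 ≤ t) (hx1 : 1 ≤ x)
    (hx : x ∉ gapSet m t) : IsRep m t x := by
  have hs1 : 1 ≤ 2*t - 1 := by omega
  have h2t : 1 ≤ 2*t := by omega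
  have hms : 1 ≤ m * (2*t-1) := by
    calc 1 = 1*1 := by ring
    _ ≤ m * (2*t-1) := Nat.mul_le_mul hm hs1
  obtain ⟨k, r, hx', hrS⟩ : ∃ k r, x = k*(2*t-1) + r ∧ r < 2*t-1 :=
    ⟨x/(2*t-1), x%(2*t-1), by
      rw [Nat.mul_comm]
      exact (Nat.div_add_mod x (2*t-1)).symm, Nat.mod_lt x (by omega)⟩
  rcases Nat.lt_or_ge r 1 with h0 | h1
  · exact ⟨k, 0, 0, by omega⟩
  rcases Nat.lt_or_ge r t with hrt | hrt
  · have hnot : ¬ (k < r * m) := by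
      intro hlt
      apply hx
      rw [mem_gapSet]
      exact ⟨r, k, h1, by omega, Or.inl ⟨by omega, by omega⟩⟩
    have hge : r*m ≤ k := by omega
    refine ⟨k - r*m, 0, r, ?_⟩
    zify [hge, h2t, hms]
    zify [h2t] at hx'
    linear_combination hx'
  · set q := 2*t-1-r with hqdef
    have hq' : q + r = 2*t-1 := by omega
    have hq1 : 1 ≤ q := by omega
    have hq2 : q + 1 ≤ t := by omega
    have hnot : ¬ (k + 1 < q * m) := by
      intro hlt
      apply hx
      rw [mem_gapSet]
      exact ⟨q, k, hq1, hq2, Or.inr ⟨by omega, by omega⟩⟩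
    have hge : q*m ≤ k + 1 := by omega
    refine ⟨k + 1 - q*m, q, 0, ?_⟩
    zify [hge, h2t, hms]
    zify [h2t] at hx' hq'
    linear_combination hx' + hq'

lemma rep_add {m t x y : ℕ} (h1 : IsRep m t x) (h2 : IsRep m t y) : IsRep m t (x+y) := by
  obtain ⟨a, b, c, h1⟩ := h1
  obtain ⟨a', b', c', h2⟩ := h2
  exact ⟨a+a', b+b', c+c', by rw [h1, h2]; ring⟩

lemma gap_closed {m t x g : ℕ} (hm : 1 ≤ m) (ht : 1 ≤ t) (hx : x ∈ gapSet m t)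
    (hg : IsRep m t g) (hgx : g ≤ x) : x - g ∈ gapSet m t := by
  by_contra h
  rcases Nat.eq_zero_or_pos (x - g) with h0 | h0
  · have : x = g := by omega
    exact gap_not_rep hm hx (this ▸ hg)
  · have hrep := rep_of_not_gap hm ht h0 h
    have : x = g + (x - g) := by omega
    exact gap_not_rep hm hx (this ▸ rep_add hg hrep)

lemma rep_peel {m t x : ℕ} (ht : 1 ≤ t) (hx1 : 1 ≤ x) (h : IsRep m t x) :
    ∃ y, IsRep m t y ∧ (x = (2*t-1) + y ∨
      (1 ≤ m*(2*t-1)-1 ∧ x = (m*(2*t-1)-1) + y) ∨ x = (m*(2*t-1)+1) + y) := by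
  obtain ⟨a, b, c, hrep⟩ := h
  rcases a with _ | a'
  · rcases c with _ | c'
    · -- x = b * (m*(2t-1)-1), x ≥ 1
      have hb1 : 1 ≤ b := by
        by_contra hb0
        have : b = 0 := by omega
        rw [this] at hrep
        simp at hrep
        omega
      have hg1 : 1 ≤ m*(2*t-1)-1 := by
        by_contra hg0
        have h00 : m*(2*t-1)-1 = 0 := by omega
        rw [h00] at hrep
        simp at hrep
        omega
      obtain ⟨b', rfl⟩ : ∃ b', b = b' + 1 := ⟨b - 1, by omega⟩
      refine ⟨b' * (m*(2*t-1)-1), ⟨0, b', 0, by ring⟩, Or.inr (Or.inl ⟨hg1, ?_⟩)⟩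
      rw [hrep]; ring
    · refine ⟨0*(2*t-1) + b*(m*(2*t-1)-1) + c'*(m*(2*t-1)+1), ⟨0, b, c', rfl⟩,
        Or.inr (Or.inr ?_)⟩
      rw [hrep]; ring
  · refine ⟨a'*(2*t-1) + b*(m*(2*t-1)-1) + c*(m*(2*t-1)+1), ⟨a', b, c, rfl⟩, Or.inl ?_⟩
    rw [hrep]; ring

lemma subset_gap {m t : ℕ} (hm : 1 ≤ m) (ht : 1 ≤ t) (S : Finset ℕ) (h0 : 0 ∉ S)
    (h1 : ∀ b ∈ S, 2*t-1 ≤ b → b - (2*t-1) ∈ S)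
    (h2 : ∀ b ∈ S, m*(2*t-1)-1 ≤ b → b - (m*(2*t-1)-1) ∈ S)
    (h3 : ∀ b ∈ S, m*(2*t-1)+1 ≤ b → b - (m*(2*t-1)+1) ∈ S) :
    S ⊆ gapSet m t := by
  have key : ∀ x, x ∈ S → IsRep m t x → False := by
    intro x
    induction x using Nat.strong_induction_on with
    | _ x ih =>
      intro hxS hxrep
      have hx1 : 1 ≤ x := by
        rcases Nat.eq_zero_or_pos x with h | h
        · exact absurd (h ▸ hxS) h0
        · exact h
      obtain ⟨y, hyrep, hcase⟩ := rep_peel ht hx1 hxrep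
      rcases hcase with hxy | ⟨hg1, hxy⟩ | hxy
      · have hyS : y ∈ S := by
          have := h1 x hxS (by omega)
          have hyx : x - (2*t-1) = y := by omega
          rwa [hyx] at this
        exact ih y (by omega) hyS hyrep
      · have hyS : y ∈ S := by
          have := h2 x hxS (by omega)
          have hyx : x - (m*(2*t-1)-1) = y := by omega
          rwa [hyx] at this
        exact ih y (by omega) hyS hyrep
      · have hyS : y ∈ S := by
          have := h3 x hxS (by omega)
          have hyx : x - (m*(2*t-1)+1) = y := by omega
          rwa [hyx] at this
        exact ih y (by omega) hyS hyrep
  intro x hxS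
  by_contra hxN
  have hx1 : 1 ≤ x := by
    rcases Nat.eq_zero_or_pos x with h | h
    · exact absurd (h ▸ hxS) h0
    · exact h
  exact key x hxS (rep_of_not_gap hm ht hx1 hxN)

def blockS (m t q : ℕ) : Finset ℕ :=
  ((Finset.range (q*m)).image (fun k => q + k*(2*t-1))) ∪
    ((Finset.range (q*m-1)).image (fun k => (2*t-1) - q + k*(2*t-1)))

lemma gapSet_eq_biUnion (m t : ℕ) :
    gapSet m t = (Finset.Icc 1 (t-1)).biUnion (blockS m t) := rfl

lemma add_mul_inj (a s : ℕ) (hs : 1 ≤ s) : Function.Injective (fun k => a + k*s) := by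
  intro k k' hkk
  simp only at hkk
  have h1 : k*s = k'*s := by omega
  exact Nat.eq_of_mul_eq_mul_right (by omega) h1

lemma mem_blockS_mod {m t q x : ℕ} (hq1 : 1 ≤ q) (hq2 : q + 1 ≤ t) (hx : x ∈ blockS m t q) :
    x % (2*t-1) = q ∨ x % (2*t-1) + q = 2*t-1 := by
  unfold blockS at hx
  rw [Finset.mem_union] at hx
  rcases hx with hx | hx <;> rw [Finset.mem_image] at hx <;> obtain ⟨k, _, rfl⟩ := hx
  · left
    rw [Nat.add_mul_mod_self_right, Nat.mod_eq_of_lt (by omega)]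
  · right
    rw [Nat.add_mul_mod_self_right, Nat.mod_eq_of_lt (by omega)]
    omega

lemma blockS_pairwise_disjoint {m t : ℕ} : ∀ q ∈ Finset.Icc 1 (t-1), ∀ q' ∈ Finset.Icc 1 (t-1),
    q ≠ q' → Disjoint (blockS m t q) (blockS m t q') := by
  intro q hq q' hq' hne
  rw [Finset.mem_Icc] at hq hq'
  rw [Finset.disjoint_left]
  intro x hx hx'
  have h1 := mem_blockS_mod (by omega) (by omega) hx
  have h2 := mem_blockS_mod (by omega) (by omega) hx'
  omega

lemma blockS_inner_disjoint {m t q : ℕ} (hq1 : 1 ≤ q) (hq2 : q + 1 ≤ t) :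
    Disjoint ((Finset.range (q*m)).image (fun k => q + k*(2*t-1)))
      ((Finset.range (q*m-1)).image (fun k => (2*t-1) - q + k*(2*t-1))) := by
  rw [Finset.disjoint_left]
  intro x hx hx'
  rw [Finset.mem_image] at hx hx'
  obtain ⟨k, _, rfl⟩ := hx
  obtain ⟨k', _, he⟩ := hx'
  have h1 : (q + k*(2*t-1)) % (2*t-1) = q := by
    rw [Nat.add_mul_mod_self_right, Nat.mod_eq_of_lt (by omega)]
  have h2 : ((2*t-1) - q + k'*(2*t-1)) % (2*t-1) = (2*t-1) - q := by
    rw [Nat.add_mul_mod_self_right, Nat.mod_eq_of_lt (by omega)]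
  rw [he] at h2
  omega

lemma blockS_card {m t q : ℕ} (hq1 : 1 ≤ q) (hq2 : q + 1 ≤ t) :
    (blockS m t q).card = q*m + (q*m - 1) := by
  unfold blockS
  rw [Finset.card_union_of_disjoint (blockS_inner_disjoint hq1 hq2),
    Finset.card_image_of_injective _ (add_mul_inj _ _ (by omega)),
    Finset.card_image_of_injective _ (add_mul_inj _ _ (by omega)),
    Finset.card_range, Finset.card_range]

lemma gap_card (m t : ℕ) : (gapSet m t).card = ∑ q ∈ Finset.Icc 1 (t-1), (q*m + (q*m - 1)) := by
  rw [gapSet_eq_biUnion, Finset.card_biUnion blockS_pairwise_disjoint]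
  apply Finset.sum_congr rfl
  intro q hq
  rw [Finset.mem_Icc] at hq
  exact blockS_card (by omega) (by omega)

lemma ap_sum (a s K : ℕ) : 2 * ∑ k ∈ Finset.range K, (a + k*s) = 2*K*a + K*(K-1)*s := by
  have h := Finset.sum_range_id_mul_two K
  rw [Finset.sum_add_distrib, Finset.sum_const, Finset.card_range, smul_eq_mul,
    ← Finset.sum_mul, Nat.mul_add, ← h]
  ring

lemma blockS_sum {m t q : ℕ} (hq1 : 1 ≤ q) (hq2 : q + 1 ≤ t) :
    2 * ∑ x ∈ blockS m t q, x =
      (2*(q*m)*q + (q*m)*(q*m-1)*(2*t-1)) +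
      (2*(q*m-1)*((2*t-1)-q) + (q*m-1)*((q*m-1)-1)*(2*t-1)) := by
  unfold blockS
  rw [Finset.sum_union (blockS_inner_disjoint hq1 hq2),
    Finset.sum_image (fun a _ b _ h => add_mul_inj _ _ (by omega) h),
    Finset.sum_image (fun a _ b _ h => add_mul_inj _ _ (by omega) h)]
  rw [Nat.mul_add, ap_sum, ap_sum]

lemma gap_sum (m t : ℕ) : 2 * ∑ x ∈ gapSet m t, x =
    ∑ q ∈ Finset.Icc 1 (t-1), ((2*(q*m)*q + (q*m)*(q*m-1)*(2*t-1)) +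
      (2*(q*m-1)*((2*t-1)-q) + (q*m-1)*((q*m-1)-1)*(2*t-1))) := by
  rw [gapSet_eq_biUnion, Finset.sum_biUnion ?hd, Finset.mul_sum]
  · apply Finset.sum_congr rfl
    intro q hq
    rw [Finset.mem_Icc] at hq
    exact blockS_sum (by omega) (by omega)
  · intro q hq q' hq' hne
    exact blockS_pairwise_disjoint q hq q' hq' hne

lemma sum_Icc_id_Z (n : ℕ) : 2 * ∑ q ∈ Finset.Icc 1 n, (q:ℤ) = n*(n+1) := by
  induction n with
  | zero => simp
  | succ n ih =>
    rw [Finset.sum_Icc_succ_top (by omega)]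
    push_cast
    push_cast at ih
    ring_nf
    ring_nf at ih
    linarith

lemma sum_Icc_sq_Z (n : ℕ) : 6 * ∑ q ∈ Finset.Icc 1 n, (q:ℤ)^2 = n*(n+1)*(2*n+1) := by
  induction n with
  | zero => simp
  | succ n ih =>
    rw [Finset.sum_Icc_succ_top (by omega)]
    push_cast
    push_cast at ih
    ring_nf
    ring_nf at ih
    linarith

lemma gap_card_Z (m t : ℕ) (hm : 1 ≤ m) (ht : 1 ≤ t) :
    ((gapSet m t).card : ℤ) = m*((t:ℤ)-1)*t - ((t:ℤ)-1) := by
  have h := gap_card m t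
  have hcast : ((gapSet m t).card : ℤ) =
      ∑ q ∈ Finset.Icc 1 (t-1), ((q*m + (q*m - 1) : ℕ) : ℤ) := by
    rw [h]; push_cast [Nat.cast_sum]; rfl
  rw [hcast]
  have hterm : ∀ q ∈ Finset.Icc 1 (t-1), ((q*m + (q*m - 1) : ℕ) : ℤ) =
      2*m*(q:ℤ) - 1 := by
    intro q hq
    rw [Finset.mem_Icc] at hq
    have h1 : 1 ≤ q*m := by
      calc 1 = 1*1 := by ring
      _ ≤ q*m := Nat.mul_le_mul (by omega) hm
    zify [h1]
    ring
  rw [Finset.sum_congr rfl hterm]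
  have h2 : ∑ q ∈ Finset.Icc 1 (t-1), (2*(m:ℤ)*(q:ℤ) - 1) =
      2*m*(∑ q ∈ Finset.Icc 1 (t-1), (q:ℤ)) - (t-1 : ℕ) := by
    rw [Finset.sum_sub_distrib, ← Finset.mul_sum, Finset.sum_const, Nat.card_Icc,
      nsmul_eq_mul, mul_one]
    congr 1
  rw [h2]
  have h3 := sum_Icc_id_Z (t-1)
  have hn : ((t-1 : ℕ):ℤ) = (t:ℤ)-1 := by omega
  rw [hn] at h3 ⊢
  linear_combination m * h3

lemma gap_sum_Z (m t : ℕ) (hm : 1 ≤ m) (ht : 1 ≤ t) :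
    12 * ∑ x ∈ gapSet m t, (x:ℤ) =
      2*m^2*(2*(t:ℤ)-1)^2*((t:ℤ)-1)*t - 6*(m*(2*(t:ℤ)-1)-1)*((t:ℤ)-1)*t := by
  have h := gap_sum m t
  have hcast : 2 * ∑ x ∈ gapSet m t, (x:ℤ) =
      ∑ q ∈ Finset.Icc 1 (t-1), (((2*(q*m)*q + (q*m)*(q*m-1)*(2*t-1)) +
        (2*(q*m-1)*((2*t-1)-q) + (q*m-1)*((q*m-1)-1)*(2*t-1)) : ℕ) : ℤ) := by
    rw [← Nat.cast_sum, ← Nat.cast_sum, ← h]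
    push_cast
    ring
  have hterm : ∀ q ∈ Finset.Icc 1 (t-1), (((2*(q*m)*q + (q*m)*(q*m-1)*(2*t-1)) +
        (2*(q*m-1)*((2*t-1)-q) + (q*m-1)*((q*m-1)-1)*(2*t-1)) : ℕ) : ℤ) =
      (2*(m:ℤ)^2*(2*(t:ℤ)-1))*(q:ℤ)^2 + (-(2*((m:ℤ)*(2*(t:ℤ)-1)-1)))*(q:ℤ) := by
    intro q hq
    rw [Finset.mem_Icc] at hq
    have h1 : 1 ≤ q*m := by
      calc 1 = 1*1 := by ring
      _ ≤ q*m := Nat.mul_le_mul (by omega) hm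
    have h2t : 1 ≤ 2*t := by omega
    have hqs : q ≤ 2*t-1 := by omega
    rcases Nat.lt_or_ge (q*m) 2 with hqm | hqm
    · have hqm1 : q*m = 1 := by omega
      have hqq : q = 1 := by
        by_contra hq2
        have : 2 ≤ q := by omega
        have : 2*1 ≤ q*m := Nat.mul_le_mul this hm
        omega
      have hmm : m = 1 := by
        by_contra hm2
        have : 2 ≤ m := by omega
        have : 1*2 ≤ q*m := Nat.mul_le_mul (by omega) this
        omega
      rw [hqm1, hqq, hmm]
      norm_num
      ring
    · have h21 : 1 ≤ q*m - 1 := by omega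
      zify [h1, h2t, hqs, h21]
      ring
  rw [Finset.sum_congr rfl hterm] at hcast
  rw [Finset.sum_add_distrib, ← Finset.mul_sum, ← Finset.mul_sum] at hcast
  have h3 := sum_Icc_sq_Z (t-1)
  have h4 := sum_Icc_id_Z (t-1)
  have hn : ((t-1 : ℕ):ℤ) = (t:ℤ)-1 := by omega
  rw [hn] at h3 h4
  linear_combination 6*hcast + (2*(m:ℤ)^2*(2*(t:ℤ)-1))*h3 +
    (-(3*(2*((m:ℤ)*(2*(t:ℤ)-1)-1))))*h4

def ofBeads (S : Finset ℕ) : List ℕ :=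
  (List.range S.card).map
    (fun i => (S.sort (·≤·)).getD (S.card - 1 - i) 0 - (S.card - 1 - i))

section OfBeads
variable (S : Finset ℕ)

lemma sort_getD_mem {i : ℕ} (hi : i < S.card) : (S.sort (·≤·)).getD i 0 ∈ S := by
  have hlen : (S.sort (·≤·)).length = S.card := Finset.length_sort _
  rw [List.getD_eq_getElem _ 0 (by omega)]
  rw [← Finset.mem_sort (α := ℕ) (·≤·)]
  exact List.getElem_mem _

lemma sort_strict_growth : ∀ i j, i ≤ j → j < S.card →
    (S.sort (·≤·)).getD i 0 + (j - i) ≤ (S.sort (·≤·)).getD j 0 := by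
  have hlen : (S.sort (·≤·)).length = S.card := Finset.length_sort _
  have hsort : (S.sort (·≤·)).Pairwise (·<·) := (Finset.sortedLT_sort S).pairwise
  have key : ∀ d i, i + d < S.card →
      (S.sort (·≤·)).getD i 0 + d ≤ (S.sort (·≤·)).getD (i + d) 0 := by
    intro d
    induction d with
    | zero => intro i _; simp
    | succ d ih =>
      intro i h'
      have h1 : i + d < S.card := by omega
      have h2 := ih i h1
      have h3 : (S.sort (·≤·)).getD (i + d) 0 < (S.sort (·≤·)).getD (i + d + 1) 0 := by
        have h3' := hsort.rel_get_of_lt (a := ⟨i + d, by omega⟩) (b := ⟨i + d + 1, by omega⟩)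
          (by simp)
        simp only [List.get_eq_getElem] at h3'
        rw [List.getD_eq_getElem _ 0 (n := i + d) (by omega),
          List.getD_eq_getElem _ 0 (n := i + d + 1) (by omega)]
        exact h3'
      have h4 : i + (d + 1) = i + d + 1 := rfl
      rw [h4]
      omega
  intro i j hij hj
  have := key (j - i) i (by omega)
  have heq : i + (j - i) = j := by omega
  rw [heq] at this
  omega

lemma sort_getD_lb (h0 : 0 ∉ S) : ∀ i, i < S.card → i + 1 ≤ (S.sort (·≤·)).getD i 0 := by
  intro i hi
  have h1 := sort_strict_growth S 0 i (by omega) hi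
  have h2 : (S.sort (·≤·)).getD 0 0 ∈ S := sort_getD_mem S (by omega)
  have h3 : (S.sort (·≤·)).getD 0 0 ≠ 0 := fun h => h0 (h ▸ h2)
  omega

lemma ofBeads_length : (ofBeads S).length = S.card := by
  unfold ofBeads
  rw [List.length_map, List.length_range]

lemma ofBeads_getD (h0 : 0 ∉ S) {i : ℕ} (hi : i < S.card) :
    (ofBeads S).getD i 0 =
      (S.sort (·≤·)).getD (S.card - 1 - i) 0 - (S.card - 1 - i) := by
  unfold ofBeads
  rw [List.getD_eq_getElem _ 0 (by rw [List.length_map, List.length_range]; omega)]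
  rw [List.getElem_map, List.getElem_range]

lemma ofBeads_partition (h0 : 0 ∉ S) : (ofBeads S).Pairwise (· ≥ ·) ∧
    ∀ x ∈ ofBeads S, 0 < x := by
  constructor
  · rw [List.pairwise_iff_get]
    intro a b hab
    have hlen : (ofBeads S).length = S.card := ofBeads_length S
    have ha : (a : ℕ) < S.card := by omega
    have hb : (b : ℕ) < S.card := by omega
    simp only [List.get_eq_getElem]
    rw [← List.getD_eq_getElem (ofBeads S) 0 (a.isLt),
      ← List.getD_eq_getElem (ofBeads S) 0 (b.isLt)]
    rw [ofBeads_getD S h0 ha, ofBeads_getD S h0 hb]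
    have hg := sort_strict_growth S (S.card - 1 - (b:ℕ)) (S.card - 1 - (a:ℕ))
      (by omega) (by omega)
    have hl1 := sort_getD_lb S h0 (S.card - 1 - (b:ℕ)) (by omega)
    have hl2 := sort_getD_lb S h0 (S.card - 1 - (a:ℕ)) (by omega)
    have hab' : (a:ℕ) < b := hab
    omega
  · intro x hx
    unfold ofBeads at hx
    rw [List.mem_map] at hx
    obtain ⟨i, hi, rfl⟩ := hx
    rw [List.mem_range] at hi
    have hl := sort_getD_lb S h0 (S.card - 1 - i) (by omega)
    omega

lemma ofBeads_beadSet (h0 : 0 ∉ S) : beadSet (ofBeads S) = S := by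
  ext x
  unfold beadSet
  rw [Finset.mem_image]
  constructor
  · rintro ⟨i, hi, rfl⟩
    rw [Finset.mem_range, ofBeads_length] at hi
    rw [ofBeads_length]
    rw [ofBeads_getD S h0 hi]
    have hl := sort_getD_lb S h0 (S.card - 1 - i) (by omega)
    have heq : (S.sort (·≤·)).getD (S.card - 1 - i) 0 - (S.card - 1 - i) +
        (S.card - 1 - i) = (S.sort (·≤·)).getD (S.card - 1 - i) 0 := by omega
    rw [heq]
    exact sort_getD_mem S (by omega)
  · intro hx
    have hx' : x ∈ S.sort (·≤·) := by rwa [Finset.mem_sort]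
    obtain ⟨j, hj⟩ := List.get_of_mem hx'
    have hlen : (S.sort (·≤·)).length = S.card := Finset.length_sort _
    have hjlt : (j : ℕ) < S.card := by omega
    refine ⟨S.card - 1 - j, by rw [Finset.mem_range, ofBeads_length]; omega, ?_⟩
    rw [ofBeads_length]
    have hi2 : S.card - 1 - (S.card - 1 - (j:ℕ)) = j := by omega
    rw [ofBeads_getD S h0 (by omega), hi2]
    have hgd : (S.sort (·≤·)).getD (j:ℕ) 0 = x := by
      rw [List.getD_eq_getElem _ 0 (by omega)]
      rw [← hj]
      simp
    rw [hgd]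
    have hl := sort_getD_lb S h0 j hjlt
    rw [hgd] at hl
    omega

end OfBeads


lemma zero_not_mem_beadSet (l : List ℕ) (h : IsPartition l) : 0 ∉ beadSet l := by
  intro h0
  rw [mem_beadSet_iff] at h0
  obtain ⟨i, hi, hb⟩ := h0
  have := bead_pos l h hi
  omega

lemma beadSet_subset_gap (m t : ℕ) (hm : 1 ≤ m) (ht : 1 ≤ t) (l : List ℕ)
    (hp : IsPartition l) (hc1 : IsCore (2*t-1) l) (hc2 : IsCore (m*(2*t-1)-1) l)
    (hc3 : IsCore (m*(2*t-1)+1) l) : beadSet l ⊆ gapSet m t := by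
  apply subset_gap hm ht _ (zero_not_mem_beadSet l hp)
  · exact (core_iff l hp _).mp hc1
  · exact (core_iff l hp _).mp hc2
  · exact (core_iff l hp _).mp hc3

lemma weight_formula (m t : ℕ) (hm : 1 ≤ m) (ht : 1 ≤ t) (l : List ℕ)
    (hp : IsPartition l) (hb : beadSet l = gapSet m t) :
    6 * l.sum = m ^ 2 * t * (t - 1) * (t ^ 2 - t + 1) := by
  have hcard := card_beadSet l hp
  have hsum := sum_beadSet l hp
  rw [hb] at hcard hsum
  rw [← hcard] at hsum
  set g := (gapSet m t).card with hgdef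
  set W := l.sum with hWdef
  -- hsum : 2 * ∑ b ∈ gapSet m t, b = 2 * W + g * (g - 1)
  have hgg : g * (g - 1) = g * g - g := by
    cases g with
    | zero => rfl
    | succ n =>
      have h1 : (n+1)*(n+1) = (n+1)*n + (n+1) := by ring
      have h2 : n + 1 - 1 = n := rfl
      rw [h2]
      omega
  rw [hgg] at hsum
  have hle : g ≤ g * g := by
    rcases Nat.eq_zero_or_pos g with h | h
    · simp [h]
    · exact Nat.le_mul_of_pos_left g h
  have hsumZ : 2*(∑ b ∈ gapSet m t, (b:ℤ)) = 2*(W:ℤ) + ((g:ℤ)*(g:ℤ) - (g:ℤ)) := by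
    zify [hle] at hsum
    linarith [hsum]
  have hsZ : 12 * (∑ b ∈ gapSet m t, (b:ℤ)) =
      2*(m:ℤ)^2*(2*(t:ℤ)-1)^2*((t:ℤ)-1)*t - 6*((m:ℤ)*(2*(t:ℤ)-1)-1)*((t:ℤ)-1)*t :=
    gap_sum_Z m t hm ht
  have hgZ := gap_card_Z m t hm ht
  rw [← hgdef] at hgZ
  have htt : t ≤ t^2 := by nlinarith
  zify [ht, htt]
  have h12 : 12*(W:ℤ) = 2*((m:ℤ)^2*(t:ℤ)*((t:ℤ)-1)*((t:ℤ)^2-(t:ℤ)+1)) := by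
    linear_combination (-6:ℤ)*hsumZ + hsZ +
      (6 - 6*((g:ℤ) + ((m:ℤ)*((t:ℤ)-1)*(t:ℤ) - ((t:ℤ)-1))))*hgZ
  linarith [h12]

theorem longest_triple_core_odd (m t : ℕ) (hm : 1 ≤ m) (ht : 1 ≤ t) :
    let s := 2 * t - 1
    let P : List ℕ → Prop := fun l => IsPartition l ∧ IsCore s l ∧
      IsCore (m * s - 1) l ∧ IsCore (m * s + 1) l
    (∃ l : List ℕ, P l ∧ (∀ l' : List ℕ, P l' → l'.length ≤ l.length) ∧
      6 * l.sum = m ^ 2 * t * (t - 1) * (t ^ 2 - t + 1)) ∧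
    (∀ l : List ℕ, P l → (∀ l' : List ℕ, P l' → l'.length ≤ l.length) →
      6 * l.sum = m ^ 2 * t * (t - 1) * (t ^ 2 - t + 1)) := by
  intro s P
  have h0N : 0 ∉ gapSet m t := by
    intro h
    have := gap_pos h
    omega
  have hpart : IsPartition (ofBeads (gapSet m t)) := ofBeads_partition (gapSet m t) h0N
  have hbead := ofBeads_beadSet (gapSet m t) h0N
  have hlen := ofBeads_length (gapSet m t)
  have hcoreP : ∀ c : ℕ, IsRep m t c → IsCore c (ofBeads (gapSet m t)) := by
    intro c hc
    rw [core_iff _ hpart]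
    intro b hbmem hcb
    rw [hbead] at hbmem ⊢
    exact gap_closed hm ht hbmem hc hcb
  have hPl0 : P (ofBeads (gapSet m t)) := by
    refine ⟨hpart, ?_, ?_, ?_⟩
    · exact hcoreP (2*t-1) ⟨1,0,0, by ring⟩
    · exact hcoreP (m*(2*t-1)-1) ⟨0,1,0, by ring⟩
    · exact hcoreP (m*(2*t-1)+1) ⟨0,0,1, by ring⟩
  have hmax : ∀ l' : List ℕ, P l' → l'.length ≤ (ofBeads (gapSet m t)).length := by
    intro l' hl'
    have hl2 : IsPartition l' ∧ IsCore (2*t-1) l' ∧ IsCore (m*(2*t-1)-1) l' ∧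
        IsCore (m*(2*t-1)+1) l' := hl'
    obtain ⟨hp', hc1, hc2, hc3⟩ := hl2
    have hsub := beadSet_subset_gap m t hm ht l' hp' hc1 hc2 hc3
    have hcard := card_beadSet l' hp'
    calc l'.length = (beadSet l').card := hcard.symm
    _ ≤ (gapSet m t).card := Finset.card_le_card hsub
    _ = (ofBeads (gapSet m t)).length := hlen.symm
  constructor
  · exact ⟨ofBeads (gapSet m t), hPl0, hmax, weight_formula m t hm ht _ hpart hbead⟩
  · intro l hl hlmax
    have hl2 : IsPartition l ∧ IsCore (2*t-1) l ∧ IsCore (m*(2*t-1)-1) l ∧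
        IsCore (m*(2*t-1)+1) l := hl
    obtain ⟨hp, hc1, hc2, hc3⟩ := hl2
    have hsub := beadSet_subset_gap m t hm ht l hp hc1 hc2 hc3
    have hge : (gapSet m t).card ≤ (beadSet l).card := by
      have h1 := hlmax (ofBeads (gapSet m t)) hPl0
      have h2 := card_beadSet l hp
      omega
    have heq : beadSet l = gapSet m t := Finset.eq_of_subset_of_card_le hsub hge
    exact weight_formula m t hm ht l hp heq
end
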